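/- For every nonzero vector v ∈ ℝ², the subgroup {A ∈ SL(2,ℤ) : ∃ r ∈ ℝ, r > 0 and Av = rv} of SL(2,ℤ) (the stabilizer of the ray through v under the induced action of SL(2,ℤ) on rays) is either trivial or infinite cyclic. -/

import Mathlib

open MeasureTheory

section Defs

variable {X : Type*} {Y : Type*}

/-- A countable Borel equivalence relation. -/
structure IsCBER [MeasurableSpace X] (E : X → X → Prop) : Prop where
  equivalence : Equivalence E
  borel : MeasurableSet {p : X × X | E p.1 p.2}
  countable_classes : ∀ x, {y | E x y}.Countable

/-- Hyperfiniteness: an increasing union of finite Borel subequivalence relations. -/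
def Hyperfinite [MeasurableSpace X] (E : X → X → Prop) : Prop :=
  ∃ F : ℕ → X → X → Prop,
    (∀ n, Equivalence (F n)) ∧
    (∀ n, MeasurableSet {p : X × X | F n p.1 p.2}) ∧
    (∀ n x y, F n x y → E x y) ∧
    (∀ n x, {y | F n x y}.Finite) ∧
    (∀ m n, m ≤ n → ∀ x y, F m x y → F n x y) ∧
    (∀ x y, E x y → ∃ n, F n x y)

/-- The restriction of a relation to a subset, as a relation on the subtype. -/
def RestrictRel (E : X → X → Prop) (B : Set X) : ↥B → ↥B → Prop :=
  fun x y => E x.1 y.1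

def HyperfiniteOn [MeasurableSpace X] (E : X → X → Prop) (B : Set X) : Prop :=
  Hyperfinite (RestrictRel E B)

def MuHyperfinite [MeasurableSpace X] (E : X → X → Prop) (μ : Measure X) : Prop :=
  ∃ C : Set X, MeasurableSet C ∧ μ Cᶜ = 0 ∧ HyperfiniteOn E C

def MeasureHyperfinite [MeasurableSpace X] (E : X → X → Prop) : Prop :=
  ∀ μ : Measure X, IsProbabilityMeasure μ → MuHyperfinite E μ

def MuNowhereHyperfinite [MeasurableSpace X] (E : X → X → Prop) (μ : Measure X) : Prop :=
  ∀ B : Set X, MeasurableSet B → μ B ≠ 0 → ¬ HyperfiniteOn E B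

def BorelReducible [MeasurableSpace X] [MeasurableSpace Y]
    (E : X → X → Prop) (F : Y → Y → Prop) : Prop :=
  ∃ f : X → Y, Measurable f ∧ ∀ x y, E x y ↔ F (f x) (f y)

def BorelEmbeddable [MeasurableSpace X] [MeasurableSpace Y]
    (E : X → X → Prop) (F : Y → Y → Prop) : Prop :=
  ∃ f : X → Y, Measurable f ∧ Function.Injective f ∧ ∀ x y, E x y ↔ F (f x) (f y)

def MuReducible [MeasurableSpace X] [MeasurableSpace Y]
    (E : X → X → Prop) (μ : Measure X) (F : Y → Y → Prop) : Prop :=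
  ∃ C : Set X, MeasurableSet C ∧ μ Cᶜ = 0 ∧ BorelReducible (RestrictRel E C) F

def MuEmbeddable [MeasurableSpace X] [MeasurableSpace Y]
    (E : X → X → Prop) (μ : Measure X) (F : Y → Y → Prop) : Prop :=
  ∃ C : Set X, MeasurableSet C ∧ μ Cᶜ = 0 ∧ BorelEmbeddable (RestrictRel E C) F

def MeasureReducible [MeasurableSpace X] [MeasurableSpace Y]
    (E : X → X → Prop) (F : Y → Y → Prop) : Prop :=
  ∀ μ : Measure X, IsProbabilityMeasure μ → MuReducible E μ F

def MeasureEmbeddable [MeasurableSpace X] [MeasurableSpace Y]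
    (E : X → X → Prop) (F : Y → Y → Prop) : Prop :=
  ∀ μ : Measure X, IsProbabilityMeasure μ → MuEmbeddable E μ F

def MuNowhereReducible [MeasurableSpace X] [MeasurableSpace Y]
    (E : X → X → Prop) (μ : Measure X) (F : Y → Y → Prop) : Prop :=
  ∀ B : Set X, MeasurableSet B → μ B ≠ 0 → ¬ BorelReducible (RestrictRel E B) F

def CountableToOne (f : X → Y) : Prop := ∀ y, (f ⁻¹' {y}).Countable

/-- Projective separability of a countable Borel equivalence relation `F` on `Y`. -/
def ProjSeparable [MeasurableSpace Y] (F : Y → Y → Prop) : Prop :=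
  ∀ (X : Type) [MeasurableSpace X] [StandardBorelSpace X]
    (E : X → X → Prop), IsCBER E →
    ∀ μ : Measure X, IsProbabilityMeasure μ → MuNowhereHyperfinite E μ →
    ∃ R : Set (X × Y), MeasurableSet R ∧ (∀ x, {y | (x, y) ∈ R}.Countable) ∧
      ∀ B : Set X, MeasurableSet B →
        ∀ φ : ↥B → Y, Measurable φ → CountableToOne φ →
          (∀ x y : ↥B, E x.1 y.1 → F (φ x) (φ y)) →
          μ {x : X | ∃ h : x ∈ B, (x, φ ⟨x, h⟩) ∉ R} = 0

/-- Acyclicity: at most one injective path between any two points. -/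
def AcyclicRel (G : X → X → Prop) : Prop :=
  ∀ (n m : ℕ) (p : Fin (n + 1) → X) (q : Fin (m + 1) → X),
    (∀ i : Fin n, G (p i.castSucc) (p i.succ)) →
    (∀ i : Fin m, G (q i.castSucc) (q i.succ)) →
    Function.Injective p → Function.Injective q →
    p 0 = q 0 → p (Fin.last n) = q (Fin.last m) →
    n = m ∧ ∀ (i : Fin (n + 1)) (j : Fin (m + 1)), (i : ℕ) = (j : ℕ) → p i = q j

def Treeable [MeasurableSpace X] (E : X → X → Prop) : Prop :=
  ∃ G : X → X → Prop,
    (∀ x, ¬ G x x) ∧ (∀ x y, G x y → G y x) ∧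
    MeasurableSet {p : X × X | G p.1 p.2} ∧
    (∀ x y, E x y ↔ Relation.EqvGen G x y) ∧ AcyclicRel G

def Saturation (E : X → X → Prop) (A : Set X) : Set X := {y | ∃ x ∈ A, E x y}

def QuasiInvariant [MeasurableSpace X] (E : X → X → Prop) (μ : Measure X) : Prop :=
  ∀ A : Set X, MeasurableSet A → μ A = 0 → μ (Saturation E A) = 0

def ErgodicRel [MeasurableSpace X] (E : X → X → Prop) (μ : Measure X) : Prop :=
  ∀ A : Set X, MeasurableSet A → (∀ x y, E x y → x ∈ A → y ∈ A) → μ A = 0 ∨ μ Aᶜ = 0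

def AperiodicRel (E : X → X → Prop) : Prop := ∀ x, {y | E x y}.Infinite

/-- `E` is a successor of `𝔼₀` under measure reducibility. -/
def SuccessorOfE0 [MeasurableSpace X] (E : X → X → Prop) : Prop :=
  ¬ MeasureHyperfinite E ∧
  ∀ (Y : Type) [MeasurableSpace Y] [StandardBorelSpace Y] (F : Y → Y → Prop),
    IsCBER F → MeasureReducible F E → ¬ MeasureHyperfinite F → MeasureReducible E F

/-- `ν` is `(E|B)`-invariant. -/
def InvariantOn [MeasurableSpace X] (E : X → X → Prop) (B : Set X) (ν : Measure X) : Prop :=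
  ∀ A : Set X, MeasurableSet A → A ⊆ B →
    ∀ f : X → X, Measurable f → Set.InjOn f A →
      (∀ x ∈ A, f x ∈ B ∧ E x (f x)) → ν A = ν (f '' A)

def InvariantMeasureHyperfinite [MeasurableSpace X] (E : X → X → Prop) : Prop :=
  ∀ B : Set X, MeasurableSet B →
    ∀ ν : Measure X, IsProbabilityMeasure ν → ν Bᶜ = 0 → InvariantOn E B ν →
      ∃ C : Set X, MeasurableSet C ∧ C ⊆ B ∧ ν (B \ C) = 0 ∧ HyperfiniteOn E C

end Defs

section AuxSL2

open Matrix
abbrev SL2Z := Matrix.SpecialLinearGroup (Fin 2) ℤ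

lemma ortho_lemma {w0 w1 x y : ℤ} (h : IsCoprime w0 w1) (hxy : x * w0 + y * w1 = 0) :
    ∃ k : ℤ, x = k * w1 ∧ y = -(k * w0) := by
  obtain ⟨a, b, hab⟩ := h
  exact ⟨b * x - a * y, by linear_combination (-x) * hab + a * hxy,
    by linear_combination (-y) * hab + b * hxy⟩

def N0 (w : Fin 2 → ℤ) : Matrix (Fin 2) (Fin 2) ℤ :=
  ![![-(w 0 * w 1), w 0 ^ 2], ![-(w 1 ^ 2), w 0 * w 1]]

lemma N0_sq (w : Fin 2 → ℤ) : N0 w * N0 w = 0 := by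
  ext i j; fin_cases i <;> fin_cases j <;> simp [Matrix.mul_apply, Fin.sum_univ_two] <;> simp [N0] <;> ring

lemma N0_mulVec (w : Fin 2 → ℤ) : (N0 w).mulVec w = 0 := by
  ext i; fin_cases i <;> simp [Matrix.mulVec, dotProduct, Fin.sum_univ_two] <;> simp [N0] <;> ring

lemma N0_key (w : Fin 2 → ℤ) (m k : ℤ) :
    ((1 : Matrix (Fin 2) (Fin 2) ℤ) + m • N0 w) * (1 + k • N0 w) = 1 + (m + k) • N0 w := by
  have h := N0_sq w
  have h2 : (m • N0 w) * (k • N0 w) = 0 := by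
    rw [Matrix.smul_mul, Matrix.mul_smul, h, smul_zero, smul_zero]
  rw [mul_add, add_mul, add_mul, mul_one, one_mul, mul_one, h2, add_smul]
  abel

def Bgen (w : Fin 2 → ℤ) : SL2Z :=
  ⟨1 + N0 w, by simp [Matrix.det_fin_two]; simp [N0]; ring⟩

lemma Bgen_coe (w : Fin 2 → ℤ) : ((Bgen w : SL2Z) : Matrix (Fin 2) (Fin 2) ℤ) = 1 + (1:ℤ) • N0 w := by
  simp [Bgen]

lemma Bgen_inv_coe (w : Fin 2 → ℤ) :
    (((Bgen w)⁻¹ : SL2Z) : Matrix (Fin 2) (Fin 2) ℤ) = 1 + (-1 : ℤ) • N0 w := by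
  have hdet : ((1 : Matrix (Fin 2) (Fin 2) ℤ) + (-1:ℤ) • N0 w).det = 1 := by
    simp [Matrix.det_fin_two]; simp [N0]; ring
  have hmul : Bgen w * ⟨1 + (-1:ℤ) • N0 w, hdet⟩ = 1 := by
    apply Subtype.ext
    show ((Bgen w : SL2Z) : Matrix (Fin 2) (Fin 2) ℤ) * (1 + (-1:ℤ) • N0 w) = 1
    rw [Bgen_coe, N0_key]
    norm_num
  rw [inv_eq_of_mul_eq_one_right hmul]

lemma Bgen_zpow (w : Fin 2 → ℤ) :
    ∀ n : ℤ, ((Bgen w ^ n : SL2Z) : Matrix (Fin 2) (Fin 2) ℤ) = 1 + n • N0 w := by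
  intro n
  induction n using Int.induction_on with
  | zero => simp
  | succ k ih =>
    rw [zpow_add_one (Bgen w) (k : ℤ), Matrix.SpecialLinearGroup.coe_mul, ih, Bgen_coe, N0_key]
  | pred k ih =>
    rw [zpow_sub_one (Bgen w) (-k : ℤ), Matrix.SpecialLinearGroup.coe_mul, ih, Bgen_inv_coe, N0_key, sub_eq_add_neg]

lemma stab_char {w : Fin 2 → ℤ} (hcop : IsCoprime (w 0) (w 1)) (A : SL2Z)
    (hA : (A : Matrix (Fin 2) (Fin 2) ℤ).mulVec w = w) :
    ∃ c : ℤ, (A : Matrix (Fin 2) (Fin 2) ℤ) = 1 + c • N0 w := by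
  set M := (A : Matrix (Fin 2) (Fin 2) ℤ) with hM
  have h0 : (M 0 0 - 1) * w 0 + M 0 1 * w 1 = 0 := by
    have := congrFun hA 0
    simp [Matrix.mulVec, dotProduct, Fin.sum_univ_two] at this
    linarith
  have h1 : M 1 0 * w 0 + (M 1 1 - 1) * w 1 = 0 := by
    have := congrFun hA 1
    simp [Matrix.mulVec, dotProduct, Fin.sum_univ_two] at this
    linarith
  obtain ⟨k0, hk00, hk01⟩ := ortho_lemma hcop h0
  obtain ⟨k1, hk10, hk11⟩ := ortho_lemma hcop h1
  have hdet : M 0 0 * M 1 1 - M 0 1 * M 1 0 = 1 := by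
    have := A.2
    rw [Matrix.det_fin_two] at this
    exact this
  have hrel : k0 * w 1 + (-k1) * w 0 = 0 := by
    linear_combination hdet + (-(M 1 1)) * hk00 + (M 1 0) * hk01 + (-(k0 * w 0)) * hk10 +
      (-1 - k0 * w 1) * hk11
  obtain ⟨c, hc0, hc1⟩ := ortho_lemma hcop.symm hrel
  refine ⟨-c, ?_⟩
  have hsm : ∀ (i j : Fin 2), ((1 : Matrix (Fin 2) (Fin 2) ℤ) + (-c) • N0 w) i j
      = (1 : Matrix (Fin 2) (Fin 2) ℤ) i j + (-c) * (N0 w i j) := by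
    intro i j
    rw [Matrix.add_apply, Matrix.smul_apply, smul_eq_mul]
  ext i j
  fin_cases i <;> fin_cases j <;> rw [hsm]
  · rw [Matrix.one_apply_eq]
    simp [N0]
    linear_combination hk00 + w 1 * hc0
  · rw [Matrix.one_apply_ne (by decide)]
    simp [N0]
    linear_combination hk01 - w 0 * hc0
  · rw [Matrix.one_apply_ne (by decide)]
    simp [N0]
    linear_combination hk10 - w 1 * hc1
  · rw [Matrix.one_apply_eq]
    simp [N0]
    linear_combination hk11 + w 0 * hc1

lemma Bgen_zpow_ne_one {w : Fin 2 → ℤ} (hcop : IsCoprime (w 0) (w 1)) (n : ℤ) (hn : n ≠ 0) :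
    Bgen w ^ n ≠ 1 := by
  intro h
  have h2 : ((Bgen w ^ n : SL2Z) : Matrix (Fin 2) (Fin 2) ℤ) = 1 := by rw [h]; rfl
  rw [Bgen_zpow] at h2
  have h01 := congrFun (congrFun h2 0) 1
  have h10 := congrFun (congrFun h2 1) 0
  rw [Matrix.add_apply, Matrix.smul_apply, smul_eq_mul,
    Matrix.one_apply_ne (by decide)] at h01
  rw [Matrix.add_apply, Matrix.smul_apply, smul_eq_mul,
    Matrix.one_apply_ne (by decide)] at h10
  simp [N0] at h01 h10
  have hw0 : w 0 = 0 := by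
    rcases h01 with h | h
    · exact absurd h hn
    · exact h
  have hw1 : w 1 = 0 := by
    rcases h10 with h | h
    · exact absurd h hn
    · exact h
  rw [hw0, hw1, isCoprime_zero_left] at hcop
  exact hcop.ne_zero rfl

noncomputable def mr (A : SL2Z) : Matrix (Fin 2) (Fin 2) ℝ :=
  ((A : Matrix (Fin 2) (Fin 2) ℤ).map (fun n : ℤ => (n : ℝ)))

lemma mr_mul (A B : SL2Z) : mr (A*B) = mr A * mr B := by
  simp only [mr, Matrix.SpecialLinearGroup.coe_mul]
  exact Matrix.map_mul (f := Int.castRingHom ℝ)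

lemma mr_one : mr 1 = 1 := by simp [mr]

lemma mr_mulVec_mul (A B : SL2Z) (v : Fin 2 → ℝ) :
    (mr (A*B)).mulVec v = (mr A).mulVec ((mr B).mulVec v) := by
  rw [mr_mul, ← Matrix.mulVec_mulVec]

lemma smul_cancel {v : Fin 2 → ℝ} (hv : v ≠ 0) {r s : ℝ} (h : r • v = s • v) : r = s := by
  obtain ⟨i, hi⟩ : ∃ i, v i ≠ 0 := by
    by_contra h'; push_neg at h'; exact hv (funext h')
  have := congrFun h i
  simp only [Pi.smul_apply, smul_eq_mul] at this
  exact mul_right_cancel₀ hi this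

lemma mulVec_cast (A : Matrix (Fin 2) (Fin 2) ℤ) (w : Fin 2 → ℤ) :
    (A.map (fun n : ℤ => (n : ℝ))).mulVec (fun i => ((w i : ℝ))) =
      fun i => ((A.mulVec w i : ℤ) : ℝ) := by
  funext i
  simp [Matrix.mulVec, dotProduct, Fin.sum_univ_two, Matrix.map_apply]

lemma eigen_int {w : Fin 2 → ℤ} (hcop : IsCoprime (w 0) (w 1)) (m : Fin 2 → ℤ) (s : ℝ)
    (h : ∀ i, ((m i : ℤ) : ℝ) = s * w i) : ∃ p : ℤ, (p : ℝ) = s := by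
  obtain ⟨a, b, hab⟩ := hcop
  refine ⟨a * m 0 + b * m 1, ?_⟩
  have hab' : ((a : ℝ) * w 0 + b * w 1) = 1 := by exact_mod_cast congrArg (fun n : ℤ => (n : ℝ)) hab
  push_cast
  rw [h 0, h 1]
  linear_combination s * hab'

lemma mem_char {v : Fin 2 → ℝ} {w : Fin 2 → ℤ} {t : ℝ} (ht : t ≠ 0)
    (hcop : IsCoprime (w 0) (w 1)) (hvw : v = t • fun i => ((w i : ℝ))) (A : SL2Z) :
    (∃ r : ℝ, 0 < r ∧ (mr A).mulVec v = r • v) ↔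
      (A : Matrix (Fin 2) (Fin 2) ℤ).mulVec w = w := by
  set wR : Fin 2 → ℝ := fun i => ((w i : ℝ)) with hwR
  constructor
  · rintro ⟨r, hr, hAv⟩
    rw [hvw, Matrix.mulVec_smul, smul_comm r t] at hAv
    have hA : (mr A).mulVec wR = r • wR := smul_right_injective (Fin 2 → ℝ) ht hAv
    have hcast := mulVec_cast (A : Matrix (Fin 2) (Fin 2) ℤ) w
    rw [show ((A : Matrix (Fin 2) (Fin 2) ℤ).map fun n : ℤ => (n:ℝ)) = mr A from rfl, hA] at hcast
    have hcomp : ∀ i, (((A : Matrix (Fin 2) (Fin 2) ℤ).mulVec w i : ℤ) : ℝ) = r * w i := by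
      intro i
      have := congrFun hcast i
      simpa using this.symm
    obtain ⟨p, hp⟩ := eigen_int hcop _ r hcomp
    -- inverse
    have h1 : (mr (A⁻¹ * A)).mulVec wR = wR := by
      rw [inv_mul_cancel, mr_one, Matrix.one_mulVec]
    rw [mr_mulVec_mul, hA, Matrix.mulVec_smul] at h1
    have hAinv : (mr A⁻¹).mulVec wR = r⁻¹ • wR := by
      rw [show (mr A⁻¹).mulVec wR = r⁻¹ • (r • (mr A⁻¹).mulVec wR) by
        rw [smul_smul, inv_mul_cancel₀ (ne_of_gt hr), one_smul], h1]
    have hcast2 := mulVec_cast ((A⁻¹ : SL2Z) : Matrix (Fin 2) (Fin 2) ℤ) w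
    rw [show (((A⁻¹ : SL2Z) : Matrix (Fin 2) (Fin 2) ℤ).map fun n : ℤ => (n:ℝ)) = mr A⁻¹ from rfl,
      hAinv] at hcast2
    have hcomp2 : ∀ i, ((((A⁻¹:SL2Z) : Matrix (Fin 2) (Fin 2) ℤ).mulVec w i : ℤ) : ℝ) = r⁻¹ * w i := by
      intro i
      have := congrFun hcast2 i
      simpa using this.symm
    obtain ⟨q, hq⟩ := eigen_int hcop _ r⁻¹ hcomp2
    have hpq : p * q = 1 := by
      have : ((p * q : ℤ) : ℝ) = 1 := by
        push_cast
        rw [hp, hq, mul_inv_cancel₀ (ne_of_gt hr)]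
      exact_mod_cast this
    have hppos : 0 < p := by
      have : (0:ℝ) < (p:ℝ) := by rw [hp]; exact hr
      exact_mod_cast this
    have hp1 : p = 1 := by
      rcases Int.isUnit_iff.mp (IsUnit.of_mul_eq_one q hpq) with h | h
      · exact h
      · omega
    have hr1 : r = 1 := by rw [← hp, hp1]; norm_num
    funext i
    have := hcomp i
    rw [hr1, one_mul] at this
    exact_mod_cast this
  · intro hAw
    refine ⟨1, one_pos, ?_⟩
    rw [hvw, Matrix.mulVec_smul, one_smul]
    congr 1
    rw [show (mr A).mulVec wR = _ from mulVec_cast (A : Matrix (Fin 2) (Fin 2) ℤ) w, hAw]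

lemma rational_case (v : Fin 2 → ℝ) {w : Fin 2 → ℤ} {t : ℝ} (ht : t ≠ 0)
    (hcop : IsCoprime (w 0) (w 1)) (hvw : v = t • fun i => ((w i : ℝ)))
    (S : Set SL2Z)
    (hS : S = {A : SL2Z | ∃ r : ℝ, 0 < r ∧
      ((A : Matrix (Fin 2) (Fin 2) ℤ).map (fun n : ℤ => (n : ℝ))).mulVec v = r • v}) :
    ∃ B ∈ S, (∀ A ∈ S, ∃ n : ℤ, A = B ^ n) ∧ (∀ n : ℤ, n ≠ 0 → B ^ n ≠ 1) := by
  have hmem : ∀ A : SL2Z, A ∈ S ↔ (A : Matrix (Fin 2) (Fin 2) ℤ).mulVec w = w := by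
    intro A; rw [hS]; exact mem_char ht hcop hvw A
  refine ⟨Bgen w, ?_, ?_, Bgen_zpow_ne_one hcop⟩
  · rw [hmem]
    rw [Bgen_coe, Matrix.add_mulVec, Matrix.one_mulVec, one_smul, N0_mulVec, add_zero]
  · intro A hA
    rw [hmem] at hA
    obtain ⟨c, hc⟩ := stab_char hcop A hA
    exact ⟨c, Subtype.ext (by rw [Bgen_zpow, hc])⟩

lemma mr_add_inv (A : SL2Z) :
    mr A + mr A⁻¹ = (((A : Matrix (Fin 2) (Fin 2) ℤ) 0 0 + (A : Matrix (Fin 2) (Fin 2) ℤ) 1 1 : ℤ) : ℝ) • 1 := by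
  rw [Matrix.SpecialLinearGroup.SL2_inv_expl A]
  ext i j
  fin_cases i <;> fin_cases j <;> simp [mr, Matrix.one_apply, Matrix.map_apply (M := ![![_, _], ![_, _]])] <;> (try (push_cast; ring))

lemma eig_inv (v : Fin 2 → ℝ) (A : SL2Z) (r : ℝ) (hr : r ≠ 0)
    (hA : (mr A).mulVec v = r • v) : (mr A⁻¹).mulVec v = r⁻¹ • v := by
  have h1 : (mr (A⁻¹ * A)).mulVec v = v := by
    rw [inv_mul_cancel, mr_one, Matrix.one_mulVec]
  rw [mr_mulVec_mul, hA, Matrix.mulVec_smul] at h1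
  rw [show (mr A⁻¹).mulVec v = r⁻¹ • (r • (mr A⁻¹).mulVec v) by
    rw [smul_smul, inv_mul_cancel₀ hr, one_smul], h1]

lemma fix_one (v : Fin 2 → ℝ) (H : ∀ a b : ℤ, a * v 0 + b * v 1 = 0 → a = 0 ∧ b = 0)
    (A : SL2Z) (hA : (mr A).mulVec v = v) : A = 1 := by
  set M := (A : Matrix (Fin 2) (Fin 2) ℤ) with hM
  have h0 := congrFun hA 0
  have h1 := congrFun hA 1
  simp [mr, Matrix.mulVec, dotProduct, Fin.sum_univ_two, Matrix.map_apply] at h0 h1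
  have e0 : ((M 0 0 - 1 : ℤ) : ℝ) * v 0 + ((M 0 1 : ℤ) : ℝ) * v 1 = 0 := by
    push_cast; linarith
  have e1 : ((M 1 0 : ℤ) : ℝ) * v 0 + ((M 1 1 - 1 : ℤ) : ℝ) * v 1 = 0 := by
    push_cast; linarith
  obtain ⟨f00, f01⟩ := H _ _ e0
  obtain ⟨f10, f11⟩ := H _ _ e1
  apply Subtype.ext
  ext i j
  fin_cases i <;> fin_cases j <;>
    simp [Matrix.one_apply, ← hM] <;> omega

lemma eq_of_same_eig (v : Fin 2 → ℝ) (H : ∀ a b : ℤ, a * v 0 + b * v 1 = 0 → a = 0 ∧ b = 0)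
    (A A' : SL2Z) (r : ℝ) (hr : 0 < r)
    (hA : (mr A).mulVec v = r • v) (hA' : (mr A').mulVec v = r • v) : A = A' := by
  have hinv : (mr A'⁻¹).mulVec v = r⁻¹ • v := eig_inv v A' r (ne_of_gt hr) hA'
  have : (mr (A'⁻¹ * A)).mulVec v = v := by
    rw [mr_mulVec_mul, hA, Matrix.mulVec_smul, hinv, smul_smul, mul_inv_cancel₀ (ne_of_gt hr),
      one_smul]
  have h1 := fix_one v H _ this
  rw [inv_mul_eq_one] at h1
  exact h1.symm

lemma irrational_case (v : Fin 2 → ℝ) (hv : v ≠ 0)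
    (H : ∀ a b : ℤ, a * v 0 + b * v 1 = 0 → a = 0 ∧ b = 0)
    (S : Set SL2Z)
    (hS : S = {A : SL2Z | ∃ r : ℝ, 0 < r ∧
      ((A : Matrix (Fin 2) (Fin 2) ℤ).map (fun n : ℤ => (n : ℝ))).mulVec v = r • v}) :
    S = {1} ∨
      ∃ B ∈ S, (∀ A ∈ S, ∃ n : ℤ, A = B ^ n) ∧ (∀ n : ℤ, n ≠ 0 → B ^ n ≠ 1) := by
  have hmem : ∀ A : SL2Z, A ∈ S ↔ ∃ r : ℝ, 0 < r ∧ (mr A).mulVec v = r • v := by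
    intro A; rw [hS]; rfl
  have one_mem : (1 : SL2Z) ∈ S := by
    rw [hmem]; exact ⟨1, one_pos, by rw [mr_one, Matrix.one_mulVec, one_smul]⟩
  -- the subgroup of logarithms of eigenvalues
  set G : AddSubgroup ℝ :=
    { carrier := {x | ∃ A ∈ S, (mr A).mulVec v = Real.exp x • v}
      zero_mem' := ⟨1, one_mem, by rw [mr_one, Matrix.one_mulVec, Real.exp_zero, one_smul]⟩
      add_mem' := by
        rintro x y ⟨A, hA, hAe⟩ ⟨B, hB, hBe⟩
        refine ⟨A * B, ?_, ?_⟩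
        · rw [hmem]
          exact ⟨Real.exp (x + y), Real.exp_pos _, by
            rw [mr_mulVec_mul, hBe, Matrix.mulVec_smul, hAe, smul_smul, ← Real.exp_add,
              add_comm y x]⟩
        · rw [mr_mulVec_mul, hBe, Matrix.mulVec_smul, hAe, smul_smul, ← Real.exp_add,
            add_comm y x]
      neg_mem' := by
        rintro x ⟨A, hA, hAe⟩
        have h := eig_inv v A (Real.exp x) (ne_of_gt (Real.exp_pos x)) hAe
        rw [← Real.exp_neg] at h
        exact ⟨A⁻¹, by rw [hmem]; exact ⟨Real.exp (-x), Real.exp_pos _, h⟩, h⟩ } with hG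
  -- gap property
  have gap : ∀ x ∈ G, x ≠ 0 → Real.log 2 ≤ |x| := by
    rintro x ⟨A, hA, hAe⟩ hx
    set t : ℤ := (A : Matrix (Fin 2) (Fin 2) ℤ) 0 0 + (A : Matrix (Fin 2) (Fin 2) ℤ) 1 1 with hT
    have hAinv := eig_inv v A (Real.exp x) (ne_of_gt (Real.exp_pos x)) hAe
    rw [← Real.exp_neg] at hAinv
    have hsum : (Real.exp x + Real.exp (-x)) • v = ((t : ℤ) : ℝ) • v := by
      have := congrArg (fun M => Matrix.mulVec M v) (mr_add_inv A)
      simp only [Matrix.add_mulVec, Matrix.smul_mulVec, Matrix.one_mulVec] at this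
      rw [hAe, hAinv, ← add_smul] at this
      exact this
    have hsum' : Real.exp x + Real.exp (-x) = ((t : ℤ) : ℝ) := smul_cancel hv hsum
    have hy1 : Real.exp x ≠ 1 := fun h => hx (Real.exp_injective (by rw [h, Real.exp_zero]))
    have hyp := Real.exp_pos x
    have hinvrel : Real.exp x * Real.exp (-x) = 1 := by
      rw [← Real.exp_add, add_neg_cancel, Real.exp_zero]
    have hsq : 0 < (Real.exp x - 1)^2 := by
      have h' : Real.exp x - 1 ≠ 0 := sub_ne_zero.mpr hy1
      positivity
    have h2 : 2 < Real.exp x + Real.exp (-x) := by nlinarith [Real.exp_pos (-x)]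
    have ht3 : (3 : ℝ) ≤ ((t : ℤ) : ℝ) := by
      have : (2:ℝ) < ((t : ℤ) : ℝ) := by rw [← hsum']; exact h2
      have h2t : (2:ℤ) < t := by exact_mod_cast this
      have : (3:ℤ) ≤ t := by omega
      exact_mod_cast this
    have habs : Real.exp |x| + Real.exp (-|x|) = Real.exp x + Real.exp (-x) := by
      rcases abs_cases x with ⟨h, _⟩ | ⟨h, _⟩
      · rw [h]
      · rw [h, neg_neg, add_comm]
    have hle1 : Real.exp (-|x|) ≤ 1 := Real.exp_le_one_iff.mpr (neg_nonpos.mpr (abs_nonneg x))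
    have h2le : (2:ℝ) ≤ Real.exp |x| := by
      have := hsum'
      linarith [habs, hle1]
    exact (Real.log_le_iff_le_exp (by norm_num : (0:ℝ) < 2)).mpr h2le
  -- apply dichotomy
  rcases G.dense_or_cyclic with hd | ⟨a, ha⟩
  · exfalso
    have hlog2 : 0 < Real.log 2 := Real.log_pos (by norm_num)
    obtain ⟨x, hxG, hx1, hx2⟩ := hd.exists_between (show Real.log 2 / 2 < Real.log 2 by linarith)
    have hxne : x ≠ 0 := by intro h; rw [h] at hx1; linarith
    have := gap x hxG hxne
    rw [abs_of_pos (by linarith : (0:ℝ) < x)] at this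
    linarith
  · rcases eq_or_ne a 0 with rfl | hane
    · -- trivial case
      left
      rw [AddSubgroup.closure_singleton_zero] at ha
      ext A
      simp only [Set.mem_singleton_iff]
      constructor
      · intro hA
        obtain ⟨r, hr, hAe⟩ := (hmem A).mp hA
        have hlr : Real.log r ∈ G := ⟨A, hA, by rw [Real.exp_log hr]; exact hAe⟩
        rw [ha, AddSubgroup.mem_bot] at hlr
        have hr1 : r = 1 := by
          rw [← Real.exp_log hr, hlr, Real.exp_zero]
        exact fix_one v H A (by rw [hAe, hr1, one_smul])
      · rintro rfl; exact one_mem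
    · right
      have haG : a ∈ G := by
        rw [ha]
        exact AddSubgroup.mem_closure_singleton.mpr ⟨1, one_zsmul a⟩
      obtain ⟨B, hBS, hBe⟩ := haG
      have hBinv : (mr B⁻¹).mulVec v = Real.exp (-a) • v := by
        rw [Real.exp_neg]
        exact eig_inv v B (Real.exp a) (ne_of_gt (Real.exp_pos a)) hBe
      have powB : ∀ n : ℤ, (mr (B ^ n)).mulVec v = Real.exp (n * a) • v := by
        intro n
        induction n using Int.induction_on with
        | zero => rw [zpow_zero, mr_one, Matrix.one_mulVec]; norm_num
        | succ k ih =>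
          rw [zpow_add_one B (k : ℤ), mr_mulVec_mul, hBe, Matrix.mulVec_smul, ih, smul_smul,
            ← Real.exp_add]
          push_cast
          ring_nf
        | pred k ih =>
          rw [zpow_sub_one B (-k : ℤ), mr_mulVec_mul, hBinv, Matrix.mulVec_smul, ih, smul_smul,
            ← Real.exp_add]
          push_cast
          ring_nf
      refine ⟨B, hBS, ?_, ?_⟩
      · intro A hA
        obtain ⟨r, hr, hAe⟩ := (hmem A).mp hA
        have hlr : Real.log r ∈ G := ⟨A, hA, by rw [Real.exp_log hr]; exact hAe⟩
        rw [ha] at hlr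
        obtain ⟨n, hn⟩ := AddSubgroup.mem_closure_singleton.mp hlr
        refine ⟨n, eq_of_same_eig v H A (B ^ n) r hr hAe ?_⟩
        rw [powB n, show (n : ℝ) * a = Real.log r by rw [← hn, zsmul_eq_mul], Real.exp_log hr]
      · intro n hn h1
        have hp := powB n
        rw [h1, mr_one, Matrix.one_mulVec] at hp
        have : (1:ℝ) = Real.exp (n * a) := smul_cancel hv (by rw [one_smul]; exact hp)
        have h0 : (n:ℝ) * a = 0 := Real.exp_injective (by rw [this.symm, Real.exp_zero])
        rcases mul_eq_zero.mp h0 with h | h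
        · exact hn (by exact_mod_cast h)
        · exact hane h


end AuxSL2

theorem sl2z_ray_stabilizer_trivial_or_infinite_cyclic
    (v : Fin 2 → ℝ) (hv : v ≠ 0)
    (S : Set (Matrix.SpecialLinearGroup (Fin 2) ℤ))
    (hS : S = {A : Matrix.SpecialLinearGroup (Fin 2) ℤ | ∃ r : ℝ, 0 < r ∧
      ((A : Matrix (Fin 2) (Fin 2) ℤ).map (fun n : ℤ => (n : ℝ))).mulVec v = r • v}) :
    S = {1} ∨
      ∃ B ∈ S, (∀ A ∈ S, ∃ n : ℤ, A = B ^ n) ∧ (∀ n : ℤ, n ≠ 0 → B ^ n ≠ 1) := by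
  by_cases H : ∀ a b : ℤ, (a : ℝ) * v 0 + (b : ℝ) * v 1 = 0 → a = 0 ∧ b = 0
  · exact irrational_case v hv H S hS
  · right
    push_neg at H
    obtain ⟨a, b, hab, hab0⟩ := H
    -- v is proportional to the integer vector (b, -a)
    have hne : b ≠ 0 ∨ -a ≠ 0 := by
      by_contra h
      push_neg at h
      obtain ⟨h1, h2⟩ := h
      exact hab0 (by omega) h1
    -- scaling factor s with v = s • (b, -a)
    have hsv : ∃ s : ℝ, s ≠ 0 ∧ v 0 = s * b ∧ v 1 = s * (-a) := by
      by_cases hb : b = 0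
      · have ha' : a ≠ 0 := by
          rcases hne with h | h
          · exact absurd hb h
          · omega
        have hv0 : v 0 = 0 := by
          have haR : (a:ℝ) ≠ 0 := Int.cast_ne_zero.mpr ha'
          have h' : (a:ℝ) * v 0 = 0 := by
            rw [hb] at hab
            push_cast at hab
            linarith
          exact (mul_eq_zero.mp h').resolve_left haR
        refine ⟨v 1 / (-a), ?_, ?_, ?_⟩
        · intro h
          apply hv
          funext i
          fin_cases i
          · exact hv0
          · have hna : ((-a : ℤ) : ℝ) ≠ 0 := Int.cast_ne_zero.mpr (by omega)
            have := div_eq_iff (by push_cast at hna ⊢; exact hna) |>.mp h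
            simpa using this
        · rw [hv0, hb]; norm_num
        · have hna : ((-a:ℝ)) ≠ 0 := by
            have : (a:ℝ) ≠ 0 := Int.cast_ne_zero.mpr ha'
            simpa using this
          push_cast
          field_simp
      · refine ⟨v 0 / b, ?_, ?_, ?_⟩
        · intro h
          apply hv
          funext i
          have hbR : (b:ℝ) ≠ 0 := Int.cast_ne_zero.mpr hb
          have hv0 : v 0 = 0 := by
            have := div_eq_iff hbR |>.mp h
            simpa using this
          fin_cases i
          · exact hv0
          · have : (b:ℝ) * v 1 = 0 := by rw [← hab, hv0]; ring
            simpa [hbR] using this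
        · have hbR : (b:ℝ) ≠ 0 := Int.cast_ne_zero.mpr hb
          field_simp
        · have hbR : (b:ℝ) ≠ 0 := Int.cast_ne_zero.mpr hb
          push_cast
          field_simp
          linarith [hab]
    obtain ⟨s, hs, hv0, hv1⟩ := hsv
    -- primitive integer vector
    set gZ : ℤ := (Int.gcd b (-a) : ℤ) with hgZ
    have hgpos : 0 < gZ := by
      rw [hgZ]
      have hgcd : Int.gcd b (-a) ≠ 0 := by
        intro h
        obtain ⟨h1, h2⟩ := Int.gcd_eq_zero_iff.mp h
        rcases hne with h' | h'
        · exact h' h1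
        · exact h' h2
      exact Int.natCast_pos.mpr (Nat.pos_of_ne_zero hgcd)
    have hdvd1 : gZ ∣ b := Int.gcd_dvd_left b (-a)
    have hdvd2 : gZ ∣ -a := Int.gcd_dvd_right b (-a)
    set w : Fin 2 → ℤ := ![b / gZ, (-a) / gZ] with hw
    have hcop : IsCoprime (w 0) (w 1) := by
      rw [Int.isCoprime_iff_gcd_eq_one]
      show Int.gcd (b / gZ) ((-a) / gZ) = 1
      exact Int.gcd_div_gcd_div_gcd (by
        have := hgpos
        rw [hgZ] at this
        exact_mod_cast this)
    have hb' : (gZ : ℤ) * (b / gZ) = b := Int.mul_ediv_cancel' hdvd1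
    have ha' : (gZ : ℤ) * ((-a) / gZ) = -a := Int.mul_ediv_cancel' hdvd2
    have ht : s * (gZ : ℝ) ≠ 0 := by
      apply mul_ne_zero hs
      exact_mod_cast ne_of_gt hgpos
    have hvw : v = (s * (gZ : ℝ)) • fun i => ((w i : ℝ)) := by
      funext i
      fin_cases i
      · show v 0 = (s * (gZ:ℝ)) * ((w 0 : ℤ) : ℝ)
        rw [hv0]
        have : ((gZ * (b / gZ) : ℤ) : ℝ) = ((b : ℤ) : ℝ) := congrArg (fun z : ℤ => (z : ℝ)) hb'
        push_cast at this
        show s * (b:ℝ) = s * (gZ:ℝ) * ((b / gZ : ℤ) : ℝ)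
        rw [mul_assoc, this]
      · show v 1 = (s * (gZ:ℝ)) * ((w 1 : ℤ) : ℝ)
        rw [hv1]
        have : ((gZ * ((-a) / gZ) : ℤ) : ℝ) = ((-a : ℤ) : ℝ) := congrArg (fun z : ℤ => (z : ℝ)) ha'
        push_cast at this
        show s * (-(a:ℝ)) = s * (gZ:ℝ) * (((-a) / gZ : ℤ) : ℝ)
        rw [mul_assoc, this]
    exact rational_case v ht hcop hvw S hS
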